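/- Let α, β > 0, ω > 0, and let n be a nonzero integer. Suppose u ∈ C²((0,∞)) satisfies the Gross–Pitaevskii vortex equation u''(r) + u'(r)/r − (n²/r² + 2ω)·u(r) − 2α·u(r)³·ln(u(r)²/β) = 0 on (0,∞), u is not identically zero, and lim_{r→∞} u(r) = 0. Then u decays exponentially at infinity: there exist constants C > 0, c > 0 and r₁ > 0 such that |u(r)| ≤ C·e^{-c·r} for all r ≥ r₁. -/

import Mathlib

open MeasureTheory Filter Set Topology

lemma gp_max_principle (r₀ : ℝ) (h h' h'' q : ℝ → ℝ)
    (hd1 : ∀ r ∈ Set.Ici r₀, HasDerivAt h (h' r) r)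
    (hd2 : ∀ r ∈ Set.Ici r₀, HasDerivAt h' (h'' r) r)
    (hq : ∀ r ∈ Set.Ici r₀, 0 < q r)
    (hineq : ∀ r ∈ Set.Ici r₀, q r * h r < h'' r + h' r / r)
    (h0 : h r₀ < 0)
    (hlim : Tendsto h atTop (nhds 0)) :
    ∀ r ∈ Set.Ici r₀, h r ≤ 0 := by
  by_contra hcon
  push_neg at hcon
  obtain ⟨x₀, hx₀mem, hx₀⟩ := hcon
  have h2 : (0:ℝ) < h x₀ / 2 := by linarith
  obtain ⟨R0, hR0⟩ := eventually_atTop.mp (hlim.eventually_lt_const h2)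
  set R := max R0 x₀ with hRdef
  have hx₀R : x₀ ≤ R := le_max_right _ _
  have hr₀R : r₀ ≤ R := le_trans hx₀mem hx₀R
  have hcont : ContinuousOn h (Set.Icc r₀ R) := fun x hx =>
    ((hd1 x hx.1).continuousAt).continuousWithinAt
  obtain ⟨rs, hrsmem, hrsmax⟩ :=
    isCompact_Icc.exists_isMaxOn ⟨r₀, le_refl _, hr₀R⟩ hcont
  have hx₀le : h x₀ ≤ h rs := hrsmax ⟨hx₀mem, hx₀R⟩
  have hrs_pos : 0 < h rs := lt_of_lt_of_le hx₀ hx₀le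
  have hglob : ∀ y ∈ Set.Ici r₀, h y ≤ h rs := by
    intro y hy
    by_cases hyR : y ≤ R
    · exact hrsmax ⟨hy, hyR⟩
    · have : R0 ≤ y := le_trans (le_max_left _ _) (le_of_not_ge hyR)
      have := hR0 y this
      linarith
  have hrs_gt : r₀ < rs := by
    rcases lt_or_eq_of_le hrsmem.1 with hlt | heq
    · exact hlt
    · exfalso; rw [← heq] at hrs_pos; linarith
  have hrsIci : rs ∈ Set.Ici r₀ := hrsmem.1
  have hmaxIci : IsMaxOn h (Set.Ici r₀) rs := fun y hy => hglob y hy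
  have hloc : IsLocalMax h rs := hmaxIci.isLocalMax (Ici_mem_nhds hrs_gt)
  have hder0 : h' rs = 0 := hloc.hasDerivAt_eq_zero (hd1 rs hrsIci)
  have hpp : 0 < h'' rs := by
    have hi := hineq rs hrsIci
    have := mul_pos (hq rs hrsIci) hrs_pos
    rw [hder0, zero_div] at hi
    linarith
  have hslope : Tendsto (slope h' rs) (𝓝[≠] rs) (𝓝 (h'' rs)) :=
    hasDerivAt_iff_tendsto_slope.mp (hd2 rs hrsIci)
  have hslope' : Tendsto (slope h' rs) (𝓝[>] rs) (𝓝 (h'' rs)) :=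
    hslope.mono_left (nhdsWithin_mono _ (fun y hy => ne_of_gt hy))
  have hev : ∀ᶠ y in 𝓝[>] rs, 0 < slope h' rs y :=
    hslope'.eventually (eventually_gt_nhds hpp)
  obtain ⟨b, hb, hIoo⟩ := mem_nhdsGT_iff_exists_Ioo_subset.mp hev
  have hpos' : ∀ y ∈ Set.Ioo rs b, 0 < h' y := by
    intro y hy
    have h1 : 0 < slope h' rs y := hIoo hy
    rw [slope_def_field, hder0, sub_zero] at h1
    have hy1 : 0 < y - rs := sub_pos.mpr hy.1
    have := mul_pos h1 hy1
    rwa [div_mul_cancel₀ _ (ne_of_gt hy1)] at this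
  have hsub : Set.Icc rs b ⊆ Set.Ici r₀ := fun x hx => le_trans (le_of_lt hrs_gt) hx.1
  have hmono : StrictMonoOn h (Set.Icc rs b) := by
    apply strictMonoOn_of_deriv_pos (convex_Icc rs b)
    · exact fun x hx => ((hd1 x (hsub hx)).continuousAt).continuousWithinAt
    · intro x hx
      rw [interior_Icc] at hx
      rw [(hd1 x (hsub ⟨le_of_lt hx.1, le_of_lt hx.2⟩)).deriv]
      exact hpos' x hx
  set m := (rs + b) / 2 with hm
  have hbm : rs < m := by simp only [hm]; linarith [hb.out]
  have hmb : m < b := by simp only [hm]; linarith [hb.out]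
  have h5 : h rs < h m :=
    hmono ⟨le_refl _, le_of_lt hb.out⟩ ⟨le_of_lt hbm, le_of_lt hmb⟩ hbm
  have h6 : h m ≤ h rs := hglob m (le_trans (le_of_lt hrs_gt) (le_of_lt hbm))
  linarith
lemma gp_nonlin_bound (α β ω : ℝ) (hα : 0 < α) (hβ : 0 < β) (hω : 0 < ω) (t : ℝ)
    (ht : |t| ≤ min 1 (ω / (2 * α * (2 + |Real.log β|)))) :
    |2 * α * t ^ 2 * Real.log (t ^ 2 / β)| ≤ ω := by
  have hL : (0:ℝ) < 2 + |Real.log β| := by positivity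
  rcases eq_or_ne t 0 with rfl | ht0
  · simpa using le_of_lt hω
  set a := |t| with ha
  have ha0 : 0 < a := abs_pos.mpr ht0
  have ha1 : a ≤ 1 := le_trans ht (min_le_left _ _)
  have ha2 : a ≤ ω / (2 * α * (2 + |Real.log β|)) := le_trans ht (min_le_right _ _)
  have f1 : Real.log (t ^ 2 / β) = 2 * Real.log a - Real.log β := by
    rw [Real.log_div (pow_ne_zero 2 ht0) (ne_of_gt hβ), Real.log_pow, ← Real.log_abs]
    push_cast; ring
  have f2 : Real.log a ≤ 0 := Real.log_nonpos (le_of_lt ha0) ha1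
  have f3 : -Real.log a ≤ a⁻¹ := by
    have := Real.log_le_sub_one_of_pos (inv_pos.mpr ha0)
    rw [Real.log_inv] at this
    have : -Real.log a ≤ a⁻¹ - 1 := this
    linarith
  have f4 : t ^ 2 = a ^ 2 := (sq_abs t).symm
  have f5 : |2 * Real.log a - Real.log β| ≤ -2 * Real.log a + |Real.log β| := by
    have := abs_sub (2 * Real.log a) (Real.log β)
    have h1 : |2 * Real.log a| = -2 * Real.log a := by
      rw [abs_of_nonpos (by linarith)]; ring
    calc |2 * Real.log a - Real.log β| ≤ |2 * Real.log a| + |Real.log β| :=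
          abs_sub _ _
      _ = -2 * Real.log a + |Real.log β| := by rw [h1]
  rw [f1, f4, abs_mul]
  have h6 : |2 * α * a ^ 2| = 2 * α * a ^ 2 := abs_of_nonneg (by positivity)
  rw [h6]
  have h7 : a ^ 2 * a⁻¹ = a := by field_simp [ne_of_gt ha0]
  have key : 2 * α * a ^ 2 * |2 * Real.log a - Real.log β|
      ≤ 2 * α * (2 * a + a ^ 2 * |Real.log β|) := by
    have := mul_le_mul_of_nonneg_left f5 (show (0:ℝ) ≤ 2 * α * a ^ 2 by positivity)
    have h8 : a ^ 2 * (-Real.log a) ≤ a ^ 2 * a⁻¹ :=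
      mul_le_mul_of_nonneg_left f3 (by positivity)
    rw [h7] at h8
    nlinarith
  have h9 : a ^ 2 ≤ a := by nlinarith
  have h10 : 2 * α * (2 * a + a ^ 2 * |Real.log β|) ≤ 2 * α * (2 + |Real.log β|) * a := by
    have : a ^ 2 * |Real.log β| ≤ a * |Real.log β| :=
      mul_le_mul_of_nonneg_right h9 (abs_nonneg _)
    nlinarith
  have h11 : 2 * α * (2 + |Real.log β|) * a ≤ ω := by
    have h12 : 0 < 2 * α * (2 + |Real.log β|) := by positivity
    have := (le_div_iff₀ h12).mp ha2
    linarith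
  linarith [key, h10, h11]
lemma gp_decay_aux (r₀ c M : ℝ) (hr₀ : 0 < r₀) (hc : 0 < c) (hM : 0 < M)
    (q v v' v'' : ℝ → ℝ)
    (hd1 : ∀ r ∈ Set.Ici r₀, HasDerivAt v (v' r) r)
    (hd2 : ∀ r ∈ Set.Ici r₀, HasDerivAt v' (v'' r) r)
    (hode : ∀ r ∈ Set.Ici r₀, v'' r + v' r / r = q r * v r)
    (hq : ∀ r ∈ Set.Ici r₀, c ^ 2 ≤ q r ∧ 0 < q r)
    (h0 : v r₀ < M * Real.exp (-c * r₀))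
    (hlim : Tendsto v atTop (nhds 0)) :
    ∀ r ∈ Set.Ici r₀, v r ≤ M * Real.exp (-c * r) := by
  have hexp : ∀ r : ℝ, HasDerivAt (fun x => M * Real.exp (-c * x))
      (-(c * (M * Real.exp (-c * r)))) r := by
    intro r
    have h1 : HasDerivAt (fun x : ℝ => -c * x) (-c) r := by
      simpa using (hasDerivAt_id r).const_mul (-c)
    have h2 := (h1.exp).const_mul M
    exact h2.congr_deriv (by ring)
  have hexp' : ∀ r : ℝ, HasDerivAt (fun x => -(c * (M * Real.exp (-c * x))))
      (c ^ 2 * (M * Real.exp (-c * r))) r := by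
    intro r
    have h2 := (((hexp r).const_mul c).neg)
    exact h2.congr_deriv (by ring)
  have hφlim : Tendsto (fun r => M * Real.exp (-c * r)) atTop (nhds 0) := by
    have h1 : Tendsto (fun r : ℝ => -c * r) atTop atBot :=
      tendsto_id.const_mul_atTop_of_neg (neg_lt_zero.mpr hc)
    have h2 := Real.tendsto_exp_atBot.comp h1
    have := h2.const_mul M
    simpa using this
  have key := gp_max_principle r₀ (fun r => v r - M * Real.exp (-c * r))
      (fun r => v' r + c * (M * Real.exp (-c * r)))
      (fun r => v'' r - c ^ 2 * (M * Real.exp (-c * r))) q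
      (fun r hr => by
        have := (hd1 r hr).sub (hexp r)
        exact this.congr_deriv (by ring))
      (fun r hr => by
        have h3 : HasDerivAt (fun x => c * (M * Real.exp (-c * x)))
            (-(c ^ 2 * (M * Real.exp (-c * r)))) r := by
          have := ((hexp r).const_mul c)
          exact this.congr_deriv (by ring)
        have h4 := (hd2 r hr).add h3
        exact h4.congr_deriv (by ring))
      (fun r hr => (hq r hr).2)
      (fun r hr => by
        have hr0 : (0:ℝ) < r := lt_of_lt_of_le hr₀ hr
        have hE : (0:ℝ) < M * Real.exp (-c * r) := by positivity
        have hode' := hode r hr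
        have hq1 := (hq r hr).1
        have e1 : (v' r + c * (M * Real.exp (-c * r))) / r
            = v' r / r + c * (M * Real.exp (-c * r)) / r := add_div _ _ _
        have e2 : 0 < c * (M * Real.exp (-c * r)) / r := by positivity
        have e3 : 0 ≤ (q r - c ^ 2) * (M * Real.exp (-c * r)) :=
          mul_nonneg (by linarith) (le_of_lt hE)
        simp only [e1]
        nlinarith)
      (by simpa using h0)
      (by simpa using hlim.sub hφlim)
  intro r hr
  have h5 : v r - M * Real.exp (-c * r) ≤ 0 := key r hr
  linarith

/-- A nontrivial solution of the Gross–Pitaevskii vortex equation tending to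
zero at infinity decays exponentially. -/
theorem gp_exponential_decay
    (α β : ℝ) (hα : 0 < α) (hβ : 0 < β) (ω : ℝ) (hω : 0 < ω)
    (n : ℤ) (hn : n ≠ 0)
    (u u' u'' : ℝ → ℝ)
    (hu' : ∀ r ∈ Set.Ioi (0 : ℝ), HasDerivAt u (u' r) r)
    (hu'' : ∀ r ∈ Set.Ioi (0 : ℝ), HasDerivAt u' (u'' r) r)
    (hu''c : ContinuousOn u'' (Set.Ioi (0 : ℝ)))
    (heq : ∀ r ∈ Set.Ioi (0 : ℝ),
      u'' r + u' r / r - ((n : ℝ) ^ 2 / r ^ 2 + 2 * ω) * u r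
        - 2 * α * (u r) ^ 3 * Real.log ((u r) ^ 2 / β) = 0)
    (hnontriv : ∃ r ∈ Set.Ioi (0 : ℝ), u r ≠ 0)
    (hlim : Tendsto u atTop (nhds 0)) :
    ∃ C > (0 : ℝ), ∃ c > (0 : ℝ), ∃ r₁ > (0 : ℝ),
      ∀ r ≥ r₁, |u r| ≤ C * Real.exp (-c * r) := by
  -- choose ε and r₀
  set ε := min 1 (ω / (2 * α * (2 + |Real.log β|))) with hεdef
  have hε : 0 < ε := by
    apply lt_min one_pos
    positivity
  have hev : ∀ᶠ r in atTop, |u r| ≤ ε := by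
    have := Metric.tendsto_nhds.mp hlim ε hε
    filter_upwards [this] with r hr
    rw [Real.dist_eq, sub_zero] at hr
    exact hr.le
  obtain ⟨N, hN⟩ := eventually_atTop.mp hev
  set r₀ := max N 1 with hr₀def
  have hr₀pos : (0:ℝ) < r₀ := lt_of_lt_of_le one_pos (le_max_right _ _)
  have hIci : ∀ r ∈ Set.Ici r₀, (0:ℝ) < r := fun r hr => lt_of_lt_of_le hr₀pos hr
  -- the decay rate
  set c := min 1 ω with hcdef
  have hc : 0 < c := lt_min one_pos hω
  have hc2 : c ^ 2 ≤ ω := by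
    have h1 : c ≤ 1 := min_le_left _ _
    have h2 : c ≤ ω := min_le_right _ _
    nlinarith
  -- the potential
  set q : ℝ → ℝ := fun r =>
    (n:ℝ) ^ 2 / r ^ 2 + 2 * ω + 2 * α * (u r) ^ 2 * Real.log ((u r) ^ 2 / β) with hqdef
  have hqbd : ∀ r ∈ Set.Ici r₀, c ^ 2 ≤ q r ∧ 0 < q r := by
    intro r hr
    have h1 : |2 * α * (u r) ^ 2 * Real.log ((u r) ^ 2 / β)| ≤ ω :=
      gp_nonlin_bound α β ω hα hβ hω (u r) (hN r (le_trans (le_max_left _ _) hr))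
    have h2 : -ω ≤ 2 * α * (u r) ^ 2 * Real.log ((u r) ^ 2 / β) := neg_le_of_abs_le h1
    have h3 : (0:ℝ) ≤ (n:ℝ) ^ 2 / r ^ 2 := by positivity
    constructor
    · simp only [hqdef]; linarith
    · simp only [hqdef]; linarith
  have hode : ∀ r ∈ Set.Ici r₀, u'' r + u' r / r = q r * u r := by
    intro r hr
    have h1 := heq r (hIci r hr)
    simp only [hqdef]
    linear_combination h1
  set M := (|u r₀| + 1) * Real.exp (c * r₀) with hMdef
  have hM : 0 < M := by positivity
  have hMr₀ : M * Real.exp (-c * r₀) = |u r₀| + 1 := by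
    rw [hMdef, mul_assoc, ← Real.exp_add]
    ring_nf
    rw [Real.exp_zero]
    ring
  have hd1 : ∀ r ∈ Set.Ici r₀, HasDerivAt u (u' r) r := fun r hr => hu' r (hIci r hr)
  have hd2 : ∀ r ∈ Set.Ici r₀, HasDerivAt u' (u'' r) r := fun r hr => hu'' r (hIci r hr)
  have key1 : ∀ r ∈ Set.Ici r₀, u r ≤ M * Real.exp (-c * r) := by
    apply gp_decay_aux r₀ c M hr₀pos hc hM q u u' u'' hd1 hd2 hode hqbd
    · rw [hMr₀]
      calc u r₀ ≤ |u r₀| := le_abs_self _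
        _ < |u r₀| + 1 := by linarith
    · exact hlim
  have key2 : ∀ r ∈ Set.Ici r₀, -u r ≤ M * Real.exp (-c * r) := by
    apply gp_decay_aux r₀ c M hr₀pos hc hM q (fun r => -u r) (fun r => -u' r)
      (fun r => -u'' r)
      (fun r hr => (hd1 r hr).neg) (fun r hr => (hd2 r hr).neg)
    · intro r hr
      have h1 := hode r hr
      simp only [hqdef] at h1 ⊢
      linear_combination -h1
    · exact hqbd
    · rw [hMr₀]
      calc -u r₀ ≤ |u r₀| := neg_le_abs _
        _ < |u r₀| + 1 := by linarith
    · simpa using hlim.neg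
  refine ⟨M, hM, c, hc, r₀, hr₀pos, fun r hr => ?_⟩
  exact abs_le.mpr ⟨by linarith [key2 r hr], key1 r hr⟩
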